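/- Let G be a communication graph with token assignment identically 0 (no tokens in any pool). For any vertex v of G, if there exists a colouring sequence that colours v green, then there does not exist a maximal colouring sequence that deadlocks before colouring v green; i.e., every maximal colouring sequence colours v green. -/
import Mathlib


/-! Formal framework: communication graphs and the red/yellow/green colouring game
(Brodsky–Pedersen–Wagner, "On the Complexity of Buffer Allocation in Message Passing Systems"),
with receive-side token pools. -/

inductive Colour : Type
  | red | yellow | green
deriving DecidableEq

/-- A communication graph: vertices are partitioned into start/send/receive/end vertices,
`pred u v` means `u` is the component predecessor of `v` (a process arc `u → v`),
`matched u v` is a communication arc from send `u` to its matching receive `v`,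
`comp v` is the index of the process component of `v`, and `pos v` is the position
of `v` within its component chain. -/
structure CommGraph (V : Type) where
  isStart : V → Prop
  isSend : V → Prop
  isRecv : V → Prop
  isEnd : V → Prop
  pred : V → V → Prop
  matched : V → V → Prop
  comp : V → ℕ
  pos : V → ℕ

namespace CommGraph

variable {V : Type}

/-- An arc of the communication graph (process arc or communication arc). -/
def GArc (G : CommGraph V) (u v : V) : Prop := G.pred u v ∨ G.matched u v

/-- Well-formedness of a communication graph: the vertex kinds partition `V`,
components are chains (unique predecessors, positions increase along process arcs),
communication arcs go from sends to receives in different components and form a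
partial matching, and the graph is acyclic (arcs admit no infinite descent). -/
structure WF (G : CommGraph V) : Prop where
  kinds : ∀ v, G.isStart v ∨ G.isSend v ∨ G.isRecv v ∨ G.isEnd v
  start_not_send : ∀ v, G.isStart v → ¬ G.isSend v
  start_not_recv : ∀ v, G.isStart v → ¬ G.isRecv v
  start_not_end : ∀ v, G.isStart v → ¬ G.isEnd v
  send_not_recv : ∀ v, G.isSend v → ¬ G.isRecv v
  send_not_end : ∀ v, G.isSend v → ¬ G.isEnd v
  recv_not_end : ∀ v, G.isRecv v → ¬ G.isEnd v
  pred_unique : ∀ {u u' v}, G.pred u v → G.pred u' v → u = u'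
  pred_comp : ∀ {u v}, G.pred u v → G.comp u = G.comp v
  pred_pos : ∀ {u v}, G.pred u v → G.pos v = G.pos u + 1
  start_no_pred : ∀ {u v}, G.pred u v → ¬ G.isStart v
  has_pred : ∀ v, ¬ G.isStart v → ∃ u, G.pred u v
  matched_send : ∀ {u v}, G.matched u v → G.isSend u
  matched_recv : ∀ {u v}, G.matched u v → G.isRecv v
  matched_comp : ∀ {u v}, G.matched u v → G.comp u ≠ G.comp v
  matched_unique_left : ∀ {u u' v}, G.matched u v → G.matched u' v → u = u'
  matched_unique_right : ∀ {u v v'}, G.matched u v → G.matched u v' → v = v'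
  send_has_match : ∀ v, G.isSend v → ∃ w, G.matched v w
  recv_has_match : ∀ v, G.isRecv v → ∃ w, G.matched w v
  dag : WellFounded fun u v => G.GArc u v

end CommGraph

/-- A state of the colouring game: the colouring, which receive vertices currently
hold a token on their incident communication arc, and the number of available
tokens in each (per-process, receive-side) pool. -/
structure St (V : Type) where
  col : V → Colour
  tok : V → Bool
  pool : ℕ → ℕ

/-- The names of the colouring rules. -/
inductive Rule : Type
  | sendYel | recvYel | recvYelTok | sendGrn | recvGrn | endYel | endGrn
deriving DecidableEq

variable {V : Type}

/-- One move of the colouring game (receive-side buffering: the token used by the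
buffered-receive rule `recvYelTok` comes from the pool of the receiving component,
and is returned when the receive turns green). -/
inductive Step [DecidableEq V] (G : CommGraph V) : Rule → St V → St V → Prop
  | sendYel {s : St V} {v u : V} :
      G.isSend v → s.col v = .red → G.pred u v → s.col u = .green →
      Step G .sendYel s ⟨Function.update s.col v .yellow, s.tok, s.pool⟩
  | recvYel {s : St V} {v u w : V} :
      G.isRecv v → s.col v = .red → G.matched w v → s.col w = .yellow →
      G.pred u v → s.col u = .green →
      Step G .recvYel s ⟨Function.update s.col v .yellow, s.tok, s.pool⟩
  | recvYelTok {s : St V} {v w : V} :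
      G.isRecv v → s.col v = .red → G.matched w v → s.col w = .yellow →
      0 < s.pool (G.comp v) →
      Step G .recvYelTok s ⟨Function.update s.col v .yellow,
        Function.update s.tok v true,
        Function.update s.pool (G.comp v) (s.pool (G.comp v) - 1)⟩
  | sendGrn {s : St V} {v r : V} :
      G.isSend v → s.col v = .yellow → G.matched v r → s.col r = .yellow →
      Step G .sendGrn s ⟨Function.update s.col v .green, s.tok, s.pool⟩
  | recvGrn {s : St V} {v u w : V} :
      G.isRecv v → s.col v = .yellow → G.pred u v → s.col u = .green →
      G.matched w v → s.col w = .green →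
      Step G .recvGrn s ⟨Function.update s.col v .green,
        Function.update s.tok v false,
        if s.tok v then
          Function.update s.pool (G.comp v) (s.pool (G.comp v) + 1)
        else s.pool⟩
  | endYel {s : St V} {v u : V} :
      G.isEnd v → s.col v = .red → G.pred u v → s.col u = .green →
      Step G .endYel s ⟨Function.update s.col v .yellow, s.tok, s.pool⟩
  | endGrn {s : St V} {v : V} :
      G.isEnd v → s.col v = .yellow →
      Step G .endGrn s ⟨Function.update s.col v .green, s.tok, s.pool⟩

/-- `IsSeq G s l` : the list `l` of (rule, state) pairs is a valid colouring sequence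
starting from state `s`. -/
def IsSeq [DecidableEq V] (G : CommGraph V) : St V → List (Rule × St V) → Prop
  | _, [] => True
  | s, p :: l => Step G p.1 s p.2 ∧ IsSeq G p.2 l

/-- The list of states visited by a colouring sequence. -/
def states (s0 : St V) (l : List (Rule × St V)) : List (St V) :=
  s0 :: l.map Prod.snd

/-- The final state of a colouring sequence. -/
def finalSt (s0 : St V) (l : List (Rule × St V)) : St V :=
  (states s0 l).getLast (by simp [states])

open Classical in
/-- The initial state: start vertices green, all others red, no tokens placed,
token pools given by the token assignment `B` (pool of component `i` holds `B i`). -/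
noncomputable def init (G : CommGraph V) (B : ℕ → ℕ) : St V :=
  ⟨fun v => if G.isStart v then Colour.green else Colour.red, fun _ => false, B⟩

/-- A state from which no colouring rule applies. -/
def MaximalFrom [DecidableEq V] (G : CommGraph V) (s : St V) : Prop :=
  ∀ ρ t, ¬ Step G ρ s t

/-- A state is complete when every vertex is green. -/
def Completes (s : St V) : Prop := ∀ v, s.col v = Colour.green

/-- A deadlocking colouring sequence from `s0`: a maximal sequence whose final
colouring has a non-green vertex. -/
def Deadlocks [DecidableEq V] (G : CommGraph V) (s0 : St V) (l : List (Rule × St V)) : Prop :=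
  IsSeq G s0 l ∧ MaximalFrom G (finalSt s0 l) ∧ ¬ Completes (finalSt s0 l)

/-- The system is safe (deadlock free) under token assignment `B`:
every maximal colouring sequence completes. -/
def DeadlockFree [DecidableEq V] (G : CommGraph V) (B : ℕ → ℕ) : Prop :=
  ∀ l, IsSeq G (init G B) l → MaximalFrom G (finalSt (init G B) l) →
    Completes (finalSt (init G B) l)

/-- A state blocks: some yellow send has a matching red receive to which the
buffered-receive rule cannot be applied (no token available). -/
def Blocked (G : CommGraph V) (s : St V) : Prop :=
  ∃ v r, G.matched v r ∧ s.col v = Colour.yellow ∧ s.col r = Colour.red ∧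
    s.pool (G.comp r) = 0

/-- The graph is block free under token assignment `B`: no colouring sequence blocks. -/
def BlockFree [DecidableEq V] (G : CommGraph V) (B : ℕ → ℕ) : Prop :=
  ∀ l, IsSeq G (init G B) l → ¬ Blocked G (finalSt (init G B) l)


namespace ZeroTok

variable {V : Type} [DecidableEq V]

/-- Next colour in the progression red → yellow → green. -/
def nextCol : Colour → Colour
  | .red => .yellow
  | .yellow => .green
  | .green => .green

/-- Vertex `v0` is enabled (can advance its colour) under colouring `c`,
assuming no tokens are available. -/
def Can (G : CommGraph V) (c : V → Colour) (v : V) : Prop :=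
  (c v = .red ∧ ((G.isSend v ∧ ∃ u, G.pred u v ∧ c u = .green) ∨
    (G.isRecv v ∧ (∃ w, G.matched w v ∧ c w = .yellow) ∧ ∃ u, G.pred u v ∧ c u = .green) ∨
    (G.isEnd v ∧ ∃ u, G.pred u v ∧ c u = .green))) ∨
  (c v = .yellow ∧ ((G.isSend v ∧ ∃ r, G.matched v r ∧ c r = .yellow) ∨
    (G.isRecv v ∧ (∃ u, G.pred u v ∧ c u = .green) ∧ ∃ w, G.matched w v ∧ c w = .green) ∨
    G.isEnd v))

/-- Advancing the colour of `v`. -/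
def upd (c : V → Colour) (v : V) : V → Colour := Function.update c v (nextCol (c v))

/-- A clean state: no tokens placed, all pools empty. -/
def Clean (s : St V) : Prop := s.tok = (fun _ => false) ∧ s.pool = (fun _ => 0)

lemma upd_noteq {c : V → Colour} {v0 x : V} (h : x ≠ v0) : upd c v0 x = c x :=
  Function.update_of_ne h _ _

lemma upd_green {c : V → Colour} {v0 v : V} (h : c v = .green) : upd c v0 v = .green := by
  by_cases hx : v = v0
  · subst hx; simp [upd, h, nextCol]
  · rw [upd_noteq hx]; exact h

/-- Every step from a clean state is an enabled colour advance, and keeps the state clean. -/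
lemma step_can {G : CommGraph V} {ρ : Rule} {s t : St V} (hc : Clean s) (h : Step G ρ s t) :
    ∃ v0, Can G s.col v0 ∧ t.col = upd s.col v0 ∧ Clean t := by
  obtain ⟨htok, hpool⟩ := hc
  cases h with
  | @sendYel _ v u hv hr hp hg =>
      exact ⟨v, Or.inl ⟨hr, Or.inl ⟨hv, u, hp, hg⟩⟩, by simp [upd, hr, nextCol], htok, hpool⟩
  | @recvYel _ v u w hv hr hm hw hp hg =>
      exact ⟨v, Or.inl ⟨hr, Or.inr (Or.inl ⟨hv, ⟨w, hm, hw⟩, u, hp, hg⟩)⟩,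
        by simp [upd, hr, nextCol], htok, hpool⟩
  | @recvYelTok _ v w hv hr hm hw hlt =>
      rw [hpool] at hlt; exact absurd hlt (by simp)
  | @sendGrn _ v r hv hy hm hr =>
      exact ⟨v, Or.inr ⟨hy, Or.inl ⟨hv, r, hm, hr⟩⟩, by simp [upd, hy, nextCol], htok, hpool⟩
  | @recvGrn _ v u w hv hy hp hg hm hw =>
      refine ⟨v, Or.inr ⟨hy, Or.inr (Or.inl ⟨hv, ⟨u, hp, hg⟩, w, hm, hw⟩)⟩,
        by simp [upd, hy, nextCol], ?_, ?_⟩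
      · funext x; by_cases hx : x = v <;> simp [Function.update, hx, htok]
      · simp [htok, hpool]
  | @endYel _ v u hv hr hp hg =>
      exact ⟨v, Or.inl ⟨hr, Or.inr (Or.inr ⟨hv, u, hp, hg⟩)⟩,
        by simp [upd, hr, nextCol], htok, hpool⟩
  | @endGrn _ v hv hy =>
      exact ⟨v, Or.inr ⟨hy, Or.inr (Or.inr hv)⟩, by simp [upd, hy, nextCol], htok, hpool⟩

/-- Conversely, an enabled colour advance at a clean state yields an actual step. -/
lemma can_step {G : CommGraph V} {s : St V} (hc : Clean s) {v0 : V} (h : Can G s.col v0) :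
    ∃ ρ, Step G ρ s ⟨upd s.col v0, s.tok, s.pool⟩ := by
  obtain ⟨htok, hpool⟩ := hc
  rcases h with ⟨hr, ⟨hv, u, hp, hg⟩ | ⟨hv, ⟨w, hm, hw⟩, u, hp, hg⟩ | ⟨hv, u, hp, hg⟩⟩ |
    ⟨hy, ⟨hv, r, hm, hrr⟩ | ⟨hv, ⟨u, hp, hg⟩, w, hm, hw⟩ | hv⟩
  · exact ⟨_, by have := Step.sendYel (s := s) hv hr hp hg; rwa [show Function.update s.col v0 .yellow = upd s.col v0 by simp [upd, hr, nextCol]] at this⟩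
  · exact ⟨_, by have := Step.recvYel (s := s) hv hr hm hw hp hg; rwa [show Function.update s.col v0 .yellow = upd s.col v0 by simp [upd, hr, nextCol]] at this⟩
  · exact ⟨_, by have := Step.endYel (s := s) hv hr hp hg; rwa [show Function.update s.col v0 .yellow = upd s.col v0 by simp [upd, hr, nextCol]] at this⟩
  · exact ⟨_, by have := Step.sendGrn (s := s) hv hy hm hrr; rwa [show Function.update s.col v0 .green = upd s.col v0 by simp [upd, hy, nextCol]] at this⟩
  · refine ⟨Rule.recvGrn, ?_⟩
    have h1 : Function.update s.tok v0 false = s.tok := by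
      funext x; by_cases hx : x = v0 <;> simp [Function.update, hx, htok]
    have h2 : s.tok v0 = false := by rw [htok]
    have := Step.recvGrn (s := s) hv hy hp hg hm hw
    rwa [show Function.update s.col v0 .green = upd s.col v0 by simp [upd, hy, nextCol],
      h1, h2, if_neg (by simp)] at this
  · exact ⟨_, by have := Step.endGrn (s := s) hv hy; rwa [show Function.update s.col v0 .green = upd s.col v0 by simp [upd, hy, nextCol]] at this⟩

/-- Commutation: an enabled vertex stays enabled after a different enabled vertex advances. -/
lemma can_upd {G : CommGraph V} (hwf : G.WF) {c : V → Colour} {v0 v1 : V}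
    (h0 : Can G c v0) (h1 : Can G c v1) (hne : v0 ≠ v1) : Can G (upd c v0) v1 := by
  have hv0ng : c v0 ≠ .green := by
    rcases h0 with ⟨h, _⟩ | ⟨h, _⟩ <;> simp [h]
  have keep : ∀ x, x ≠ v0 → upd c v0 x = c x := fun x hx => upd_noteq hx
  have kv1 := keep v1 (Ne.symm hne)
  rcases h1 with ⟨hr, ⟨hv, u, hp, hg⟩ | ⟨hv, ⟨w, hm, hw⟩, u, hp, hg⟩ | ⟨hv, u, hp, hg⟩⟩ |
    ⟨hy, ⟨hv, r, hm, hrr⟩ | ⟨hv, ⟨u, hp, hg⟩, w, hm, hw⟩ | hv⟩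
  · have hu : u ≠ v0 := fun e => hv0ng (e ▸ hg)
    exact Or.inl ⟨kv1.trans hr, Or.inl ⟨hv, u, hp, (keep u hu).trans hg⟩⟩
  · have hu : u ≠ v0 := fun e => hv0ng (e ▸ hg)
    have hwv0 : w ≠ v0 := by
      intro e; subst e
      have hws : G.isSend w := hwf.matched_send hm
      rcases h0 with ⟨h, _⟩ | ⟨_, ⟨_, r, hm', hr'⟩ | ⟨hrecv, _⟩ | hend⟩
      · rw [hw] at h; exact Colour.noConfusion h
      · have : r = v1 := hwf.matched_unique_right hm' hm
        subst this; rw [hr] at hr'; exact Colour.noConfusion hr'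
      · exact hwf.send_not_recv w hws hrecv
      · exact hwf.send_not_end w hws hend
    exact Or.inl ⟨kv1.trans hr, Or.inr (Or.inl ⟨hv, ⟨w, hm, (keep w hwv0).trans hw⟩,
      u, hp, (keep u hu).trans hg⟩)⟩
  · have hu : u ≠ v0 := fun e => hv0ng (e ▸ hg)
    exact Or.inl ⟨kv1.trans hr, Or.inr (Or.inr ⟨hv, u, hp, (keep u hu).trans hg⟩)⟩
  · have hrv0 : r ≠ v0 := by
      intro e; subst e
      have hrrcv : G.isRecv r := hwf.matched_recv hm
      rcases h0 with ⟨h, _⟩ | ⟨_, ⟨hsend, _⟩ | ⟨_, _, w, hm', hw'⟩ | hend⟩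
      · rw [hrr] at h; exact Colour.noConfusion h
      · exact hwf.send_not_recv r hsend hrrcv
      · have : w = v1 := hwf.matched_unique_left hm' hm
        subst this; rw [hy] at hw'; exact Colour.noConfusion hw'
      · exact hwf.recv_not_end r hrrcv hend
    exact Or.inr ⟨kv1.trans hy, Or.inl ⟨hv, r, hm, (keep r hrv0).trans hrr⟩⟩
  · have hu : u ≠ v0 := fun e => hv0ng (e ▸ hg)
    have hwv0 : w ≠ v0 := fun e => hv0ng (e ▸ hw)
    exact Or.inr ⟨kv1.trans hy, Or.inr (Or.inl ⟨hv, ⟨u, hp, (keep u hu).trans hg⟩,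
      w, hm, (keep w hwv0).trans hw⟩)⟩
  · exact Or.inr ⟨kv1.trans hy, Or.inr (Or.inr hv)⟩

/-- Abstract reachability between colourings by enabled advances. -/
inductive Reaches (G : CommGraph V) : (V → Colour) → (V → Colour) → Prop
  | refl (c) : Reaches G c c
  | step {c c' : V → Colour} {v0 : V} :
      Can G c v0 → Reaches G (upd c v0) c' → Reaches G c c'

lemma upd_comm {c : V → Colour} {u v0 : V} (h : u ≠ v0) :
    upd (upd c u) v0 = upd (upd c v0) u := by
  have h1 : upd c u v0 = c v0 := upd_noteq (Ne.symm h)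
  have h2 : upd c v0 u = c u := upd_noteq h
  show Function.update (upd c u) v0 (nextCol (upd c u v0)) =
    Function.update (upd c v0) u (nextCol (upd c v0 u))
  rw [h1, h2]
  exact Function.update_comm h _ _ _

/-- Preservation: if `v` can become green from `c`, it still can after any enabled advance. -/
lemma preserve {G : CommGraph V} (hwf : G.WF) {c c' : V → Colour} {v : V}
    (h : Reaches G c c') (hg : c' v = .green) :
    ∀ u, Can G c u → ∃ c'', Reaches G (upd c u) c'' ∧ c'' v = .green := by
  induction h with
  | refl c => exact fun u _ => ⟨upd c u, .refl _, upd_green hg⟩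
  | @step c c' v0 h0 hr ih =>
    intro u hu
    by_cases he : u = v0
    · subst he; exact ⟨c', hr, hg ▸ rfl⟩
    · have h1 : Can G (upd c u) v0 := can_upd hwf hu h0 he
      have h2 : Can G (upd c v0) u := can_upd hwf h0 hu (Ne.symm he)
      obtain ⟨c'', hc'', hgv⟩ := ih hg u h2
      refine ⟨c'', .step h1 ?_, hgv⟩
      rw [upd_comm he]; exact hc''

/-- Transport green-reachability of `v` along any path. -/
lemma transport {G : CommGraph V} (hwf : G.WF) {a b : V → Colour} (h : Reaches G a b) :
    ∀ {v : V}, (∃ c, Reaches G a c ∧ c v = .green) →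
      ∃ c, Reaches G b c ∧ c v = .green := by
  induction h with
  | refl => exact fun h => h
  | @step c c' v0 h0 _ ih =>
    intro v ⟨d, hac, hg⟩
    obtain ⟨c'', h1, h2⟩ := preserve hwf hac hg v0 h0
    exact ih ⟨c'', h1, h2⟩

lemma finalSt_nil (s : St V) : finalSt s ([] : List (Rule × St V)) = s := rfl

lemma finalSt_cons (s : St V) (p : Rule × St V) (l : List (Rule × St V)) :
    finalSt s (p :: l) = finalSt p.2 l := by
  simp [finalSt, states, List.getLast_cons]

lemma seq_reaches {G : CommGraph V} :
    ∀ (l : List (Rule × St V)) (s : St V), Clean s → IsSeq G s l →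
      Reaches G s.col (finalSt s l).col ∧ Clean (finalSt s l)
  | [], s, hc, _ => ⟨.refl _, hc⟩
  | p :: l, s, hc, ⟨hstep, hrest⟩ => by
    obtain ⟨v0, hcan, hcol, hct⟩ := step_can hc hstep
    obtain ⟨hr, hcf⟩ := seq_reaches l p.2 hct hrest
    rw [finalSt_cons]
    exact ⟨.step hcan (hcol ▸ hr), hcf⟩

end ZeroTok

/-- **Lemma (zero tokens).** Let `G` be a communication graph with the zero token
assignment. For any vertex `v`, if some colouring sequence colours `v` green, then
no maximal colouring sequence deadlocks before colouring `v` green: every maximal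
colouring sequence colours `v` green. -/
theorem zero_token_vertex_confluence {V : Type} [DecidableEq V] [Fintype V]
    (G : CommGraph V) (hwf : G.WF) (v : V)
    (hgreen : ∃ l, IsSeq G (init G fun _ => 0) l ∧
      (finalSt (init G fun _ => 0) l).col v = Colour.green) :
    ∀ l, IsSeq G (init G fun _ => 0) l →
      MaximalFrom G (finalSt (init G fun _ => 0) l) →
      (finalSt (init G fun _ => 0) l).col v = Colour.green := by
  classical
  obtain ⟨l0, hseq0, hg0⟩ := hgreen
  intro l hseq hmax
  have hcinit : ZeroTok.Clean (init G fun _ => 0) := ⟨rfl, rfl⟩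
  obtain ⟨hr0, -⟩ := ZeroTok.seq_reaches l0 _ hcinit hseq0
  obtain ⟨hr, hcf⟩ := ZeroTok.seq_reaches l _ hcinit hseq
  obtain ⟨c2, hd, hg2⟩ := ZeroTok.transport hwf hr ⟨_, hr0, hg0⟩
  cases hd with
  | refl => exact hg2
  | step h0 _ =>
    obtain ⟨ρ, hstep⟩ := ZeroTok.can_step hcf h0
    exact absurd hstep (hmax ρ _)
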